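/- arXiv:1610.09929 — 4 statements merged into one kernel-verified Lean document; each statement's English description precedes it below -/
import Mathlib

section
/- If H is an n×n real symmetric positive semidefinite matrix with H_ii = 1 for all i (so that every entry satisfies |H_ij| ≤ 1), then the matrix arcsin∘H − H is positive semidefinite, where (arcsin∘H)_ij = arcsin(H_ij) denotes the entrywise arcsine of H. -/
open Matrix

section ArcsinAux

open Real Set


noncomputable def asb (k : ℕ) : ℝ := (Nat.centralBinom k : ℝ) / 4 ^ k
noncomputable def asc (k : ℕ) : ℝ := asb k / (2 * k + 1)

lemma asb_pos (k : ℕ) : 0 < asb k :=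
  div_pos (by exact_mod_cast Nat.centralBinom_pos k) (by positivity)

lemma asb_rec (k : ℕ) : (2 * (k:ℝ) + 2) * asb (k + 1) = (2 * k + 1) * asb k := by
  unfold asb
  have h := Nat.succ_mul_centralBinom_succ k
  have h' : ((k:ℝ) + 1) * (Nat.centralBinom (k+1) : ℝ) = 2 * (2 * k + 1) * Nat.centralBinom k := by
    exact_mod_cast congrArg (Nat.cast : ℕ → ℝ) h
  have h4 : (4:ℝ) ^ (k+1) = 4 * 4 ^ k := by ring
  field_simp [h4]
  rw [h4]; linear_combination (2 * (4:ℝ)^k) * h'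

lemma asb_le_one (k : ℕ) : asb k ≤ 1 := by
  induction k with
  | zero => simp [asb, Nat.centralBinom]
  | succ k ih =>
    have h := asb_rec k
    have h2 : (0:ℝ) < 2 * k + 2 := by positivity
    nlinarith [asb_pos k, asb_pos (k+1)]

lemma asc_nonneg (k : ℕ) : 0 ≤ asc k := by
  have := asb_pos k
  unfold asc; positivity

lemma asc_mul (k : ℕ) : asc k * (2 * k + 1) = asb k := by
  unfold asc
  field_simp

lemma asc_zero : asc 0 = 1 := by norm_num [asc, asb, Nat.centralBinom]

noncomputable def Gfun (s : ℝ) : ℝ := ∑' k, asb k * s ^ (2 * k)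
noncomputable def GD (s : ℝ) : ℝ := ∑' k, asb k * (2 * k) * s ^ (2 * k - 1)

lemma summable_G {s : ℝ} (hs : |s| < 1) : Summable (fun k => asb k * s ^ (2 * k)) := by
  apply Summable.of_norm_bounded (g := fun k => (s ^ 2) ^ k)
  · exact summable_geometric_of_lt_one (by positivity) (by nlinarith [abs_nonneg s, sq_abs s])
  · intro k
    rw [norm_mul, norm_pow, pow_mul]
    have h1 : ‖asb k‖ ≤ 1 := by rw [Real.norm_eq_abs, abs_of_pos (asb_pos k)]; exact asb_le_one k
    have h2 : ‖s‖ ^ 2 ≤ s ^ 2 := by rw [Real.norm_eq_abs, sq_abs]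
    calc ‖asb k‖ * (‖s‖ ^ 2) ^ k ≤ 1 * (s^2) ^ k := by
          apply mul_le_mul h1 (pow_le_pow_left₀ (by positivity) h2 k) (by positivity) one_pos.le
      _ = (s^2) ^ k := one_mul _

lemma hasDerivAt_G {s : ℝ} (hs : s ∈ Ioo (-1:ℝ) 1) : HasDerivAt Gfun (GD s) s := by
  obtain ⟨h1, h2⟩ := hs
  set r : ℝ := (1 + |s|) / 2 with hr
  have habs : |s| < 1 := abs_lt.2 ⟨h1, h2⟩
  have hr0 : 0 < r := by positivity
  have hsr : |s| < r := by rw [hr]; linarith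
  have hr1 : r < 1 := by rw [hr]; linarith
  set u : ℕ → ℝ := fun k => 2 * ((k:ℝ) + 1) * r ^ k with hu_def
  set g : ℕ → ℝ → ℝ := fun k y => asb k * y ^ (2 * k) with hg_def
  set g' : ℕ → ℝ → ℝ := fun k y => asb k * (2 * (k:ℝ)) * y ^ (2 * k - 1) with hg'_def
  have hu : Summable u := by
    have h1 := summable_pow_mul_geometric_of_norm_lt_one 1
      (show ‖r‖ < 1 by rwa [Real.norm_eq_abs, abs_of_pos hr0])
    have h2 := summable_geometric_of_lt_one hr0.le hr1
    have h3 : Summable (fun (k:ℕ) => ((k:ℝ) + 1) * r ^ k) := by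
      simpa [pow_one, add_mul, one_mul] using h1.add h2
    simpa [hu_def, mul_assoc] using h3.mul_left 2
  have hg : ∀ k y, y ∈ Ioo (-r) r → HasDerivAt (g k) (g' k y) y := by
    intro k y _
    simpa [hg_def, hg'_def, mul_comm, mul_assoc, mul_left_comm]
      using (hasDerivAt_pow (2 * k) y).const_mul (asb k)
  have hg' : ∀ k y, y ∈ Ioo (-r) r → ‖g' k y‖ ≤ u k := by
    intro k y hy
    have hyr : |y| ≤ r := le_of_lt (abs_lt.2 ⟨hy.1, hy.2⟩)
    rcases Nat.eq_zero_or_pos k with rfl | hk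
    · simp [hg'_def, hu_def]
    · have hkk : k ≤ 2 * k - 1 := by omega
      have hy1 : |y| ≤ 1 := hyr.trans hr1.le
      have e1 : ‖g' k y‖ = asb k * (2 * (k:ℝ)) * |y| ^ (2 * k - 1) := by
        rw [hg'_def]
        simp only [norm_mul, norm_pow, Real.norm_eq_abs, abs_mul]
        rw [abs_of_pos (asb_pos k), Nat.abs_cast, abs_of_nonneg (by norm_num : (0:ℝ) ≤ 2)]
      rw [e1, hu_def]
      have e2 : |y| ^ (2 * k - 1) ≤ r ^ k := by
        calc |y| ^ (2 * k - 1) ≤ |y| ^ k := pow_le_pow_of_le_one (abs_nonneg y) hy1 hkk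
          _ ≤ r ^ k := pow_le_pow_left₀ (abs_nonneg y) hyr k
      have e3 : asb k * (2 * (k:ℝ)) ≤ 2 * ((k:ℝ) + 1) := by
        nlinarith [asb_le_one k, asb_pos k, (Nat.cast_pos (α := ℝ)).2 hk]
      have hrk : (0:ℝ) ≤ r ^ k := by positivity
      calc asb k * (2 * (k:ℝ)) * |y| ^ (2*k-1) ≤ asb k * (2 * (k:ℝ)) * r ^ k := by
            apply mul_le_mul_of_nonneg_left e2 (mul_nonneg (asb_pos k).le (by positivity))
        _ ≤ 2 * ((k:ℝ) + 1) * r ^ k := mul_le_mul_of_nonneg_right e3 hrk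
  have hy₀ : (0:ℝ) ∈ Ioo (-r) r := ⟨by linarith, hr0⟩
  have hg0 : Summable (fun k => g k 0) := by
    apply summable_of_ne_finset_zero (s := ({0} : Finset ℕ))
    intro k hk
    simp only [Finset.mem_singleton] at hk
    have hne : 2 * k ≠ 0 := by omega
    simp [hg_def, zero_pow hne]
  have hy : s ∈ Ioo (-r) r := abs_lt.1 hsr
  exact hasDerivAt_tsum_of_isPreconnected hu isOpen_Ioo (convex_Ioo _ _).isPreconnected
    hg hg' hy₀ hg0 hy

lemma summable_master {s : ℝ} (hs : |s| < 1) (f : ℕ → ℝ)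
    (hf : ∀ k, |f k| ≤ (2 * k + 2) * |s| ^ k) : Summable f := by
  have h1 := summable_pow_mul_geometric_of_norm_lt_one 1
    (show ‖|s|‖ < 1 by rwa [Real.norm_eq_abs, abs_abs])
  have h2 := summable_geometric_of_lt_one (abs_nonneg s) hs
  have h3 : Summable (fun (k:ℕ) => (2 * (k:ℝ) + 2) * |s| ^ k) := by
    have := (h1.add h2).mul_left 2
    apply this.congr
    intro k; push_cast; ring
  exact Summable.of_norm_bounded h3 (fun k => by rw [Real.norm_eq_abs]; exact hf k)

lemma summable_e {s : ℝ} (hs : |s| < 1) :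
    Summable (fun k : ℕ => (2 * (k:ℝ) + 1) * asb k * s ^ (2 * k + 1)) := by
  apply summable_master hs
  intro k
  have h1 : |s| ≤ 1 := hs.le
  rw [abs_mul, abs_mul, abs_pow, abs_of_pos (asb_pos k),
    abs_of_pos (by positivity : (0:ℝ) < 2 * (k:ℝ) + 1)]
  have h2 : |s| ^ (2 * k + 1) ≤ |s| ^ k :=
    pow_le_pow_of_le_one (abs_nonneg s) h1 (by omega)
  have h3 : (2 * (k:ℝ) + 1) * asb k ≤ 2 * (k:ℝ) + 2 := by
    nlinarith [asb_le_one k, asb_pos k]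
  have hp : (0:ℝ) ≤ |s| ^ k := by positivity
  nlinarith [pow_nonneg (abs_nonneg s) (2*k+1), asb_pos k]

lemma summable_GD {s : ℝ} (hs : |s| < 1) :
    Summable (fun k => asb k * (2 * (k:ℝ)) * s ^ (2 * k - 1)) := by
  apply summable_master hs
  intro k
  rcases Nat.eq_zero_or_pos k with rfl | hk
  · simp
  simp only [abs_mul, abs_pow, Nat.abs_cast, abs_two]
  rw [abs_of_pos (asb_pos k)]
  have h2 : |s| ^ (2 * k - 1) ≤ |s| ^ k :=
    pow_le_pow_of_le_one (abs_nonneg s) hs.le (by omega)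
  have hp : (0:ℝ) ≤ |s| ^ k := by positivity
  have hp2 : (0:ℝ) ≤ |s| ^ (2 * k - 1) := by positivity
  calc asb k * (2 * (k:ℝ)) * |s| ^ (2 * k - 1)
      ≤ (2 * (k:ℝ)) * |s| ^ (2 * k - 1) := by
        nlinarith [mul_nonneg (mul_nonneg (sub_nonneg.2 (asb_le_one k))
          (by positivity : (0:ℝ) ≤ 2*(k:ℝ))) hp2]
    _ ≤ (2 * (k:ℝ)) * |s| ^ k := by
        apply mul_le_mul_of_nonneg_left h2 (by positivity)
    _ ≤ (2 * (k:ℝ) + 2) * |s| ^ k := by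
        apply mul_le_mul_of_nonneg_right (by linarith) hp

lemma ode {s : ℝ} (hs : s ∈ Ioo (-1:ℝ) 1) : (1 - s^2) * GD s = s * Gfun s := by
  have habs : |s| < 1 := abs_lt.2 ⟨hs.1, hs.2⟩
  have hGD := summable_GD habs
  have hG := summable_G habs
  have he := summable_e habs
  have h1 : GD s = ∑' k : ℕ, (2 * (k:ℝ) + 1) * asb k * s ^ (2 * k + 1) := by
    rw [GD, Summable.tsum_eq_zero_add hGD]
    simp only [Nat.cast_zero, mul_zero, zero_mul, mul_zero, zero_add]
    norm_num
    congr 1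
    funext k
    have hrec := asb_rec k
    have hexp : 2 * (k + 1) - 1 = 2 * k + 1 := by omega
    rw [hexp]
    push_cast
    rw [show asb (k+1) * (2*((k:ℝ)+1)) = (2*(k:ℝ)+1) * asb k from by linear_combination hrec]
  have h2 : s^2 * GD s + s * Gfun s = ∑' k : ℕ, (2 * (k:ℝ) + 1) * asb k * s ^ (2 * k + 1) := by
    rw [GD, Gfun, ← tsum_mul_left, ← tsum_mul_left, ← Summable.tsum_add (hGD.mul_left (s^2)) (hG.mul_left s)]
    congr 1
    funext k
    rcases Nat.eq_zero_or_pos k with rfl | hk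
    · simp; ring
    · have hexp : 2 * k - 1 + 2 = 2 * k + 1 := by omega
      have : s ^ 2 * s ^ (2 * k - 1) = s ^ (2 * k + 1) := by
        rw [← pow_add, Nat.add_comm, hexp]
      calc s^2 * (asb k * (2 * (k:ℝ)) * s ^ (2*k-1)) + s * (asb k * s ^ (2*k))
          = (asb k * (2 * (k:ℝ))) * (s^2 * s ^ (2*k-1)) + asb k * (s * s ^ (2*k)) := by ring
        _ = (2 * (k:ℝ) + 1) * asb k * s ^ (2*k+1) := by
            rw [this, ← pow_succ']; ring_nf
  nlinarith [h1, h2]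

lemma eq_at_zero {f : ℝ → ℝ} (hf : ∀ x ∈ Ioo (-1:ℝ) 1, HasDerivAt f 0 x)
    {s : ℝ} (hs : s ∈ Ioo (-1:ℝ) 1) : f s = f 0 := by
  have key : ∀ a b : ℝ, a < b → a ∈ Ioo (-1:ℝ) 1 → b ∈ Ioo (-1:ℝ) 1 → f a = f b := by
    intro a b hab ha hb
    have hmem : ∀ x ∈ Icc a b, x ∈ Ioo (-1:ℝ) 1 :=
      fun x hx => ⟨lt_of_lt_of_le ha.1 hx.1, lt_of_le_of_lt hx.2 hb.2⟩
    have hcont : ContinuousOn f (Icc a b) :=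
      fun x hx => ((hf x (hmem x hx)).continuousAt).continuousWithinAt
    obtain ⟨c, _, hceq⟩ := exists_hasDerivAt_eq_slope f (fun _ => 0) hab hcont
      (fun x hx => hf x (hmem x (Ioo_subset_Icc_self hx)))
    have hne : b - a ≠ 0 := sub_ne_zero.2 hab.ne'
    have := div_eq_zero_iff.mp hceq.symm
    rcases this with h | h
    · linarith [sub_eq_zero.mp h]
    · exact absurd h hne
  rcases lt_trichotomy s 0 with h | h | h
  · exact key s 0 h hs ⟨by norm_num, by norm_num⟩
  · rw [h]
  · exact (key 0 s h ⟨by norm_num, by norm_num⟩ hs).symm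

lemma G_eq {s : ℝ} (hs : s ∈ Ioo (-1:ℝ) 1) : Real.sqrt (1 - s^2) * Gfun s = 1 := by
  have hderiv : ∀ x ∈ Ioo (-1:ℝ) 1,
      HasDerivAt (fun y => Real.sqrt (1 - y^2) * Gfun y) 0 x := by
    intro x hx
    have hx2 : (0:ℝ) < 1 - x^2 := by nlinarith [hx.1, hx.2]
    have hsq : HasDerivAt (fun y : ℝ => 1 - y^2) (-(2*x)) x := by
      simpa using ((hasDerivAt_pow 2 x).const_sub 1)
    have hsqrt : HasDerivAt (fun y : ℝ => Real.sqrt (1 - y^2))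
        (1 / (2 * Real.sqrt (1 - x^2)) * (-(2*x))) x :=
      (Real.hasDerivAt_sqrt hx2.ne').comp x hsq
    have hmul := hsqrt.mul (hasDerivAt_G hx)
    refine hmul.congr_deriv ?_
    set q := Real.sqrt (1 - x^2) with hqdef
    have hq : 0 < q := Real.sqrt_pos.2 hx2
    have hq2 : q^2 = 1 - x^2 := Real.sq_sqrt hx2.le
    have key := ode hx
    have hqq : q * q = 1 - x^2 := by nlinarith [hq2]
    have expand : 1 / (2*q) * -(2*x) * Gfun x + q * GD x
        = (-(x * Gfun x) + (q * q) * GD x) / q := by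
      field_simp
    symm
    rw [expand, hqq, key]
    simp
  have h0 : Real.sqrt (1 - (0:ℝ)^2) * Gfun 0 = 1 := by
    have hG0 : Gfun 0 = 1 := by
      rw [Gfun, tsum_eq_single 0]
      · simp [asb, Nat.centralBinom]
      · intro b hb
        have : 2 * b ≠ 0 := by omega
        simp [zero_pow this]
    simp [hG0]
  calc Real.sqrt (1 - s^2) * Gfun s = Real.sqrt (1 - (0:ℝ)^2) * Gfun 0 :=
        eq_at_zero hderiv hs
    _ = 1 := h0

noncomputable def Ffun (s : ℝ) : ℝ := ∑' k : ℕ, asc k * s ^ (2 * k + 1)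

lemma summable_F {s : ℝ} (hs : |s| < 1) : Summable (fun k : ℕ => asc k * s ^ (2 * k + 1)) := by
  apply summable_master hs
  intro k
  rw [abs_mul, abs_pow, abs_of_nonneg (asc_nonneg k)]
  have h1 : asc k ≤ 1 := by
    have := asb_le_one k
    have h0 : (0:ℝ) < 2 * (k:ℝ) + 1 := by positivity
    rw [asc, div_le_one h0]
    nlinarith [asb_pos k]
  have h2 : |s| ^ (2 * k + 1) ≤ |s| ^ k :=
    pow_le_pow_of_le_one (abs_nonneg s) hs.le (by omega)
  have hp : (0:ℝ) ≤ |s| ^ (2*k+1) := by positivity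
  have hp2 : (0:ℝ) ≤ |s| ^ k := by positivity
  nlinarith [asc_nonneg k]

lemma hasDerivAt_F {s : ℝ} (hs : s ∈ Ioo (-1:ℝ) 1) : HasDerivAt Ffun (Gfun s) s := by
  obtain ⟨h1, h2⟩ := hs
  set r : ℝ := (1 + |s|) / 2 with hr
  have habs : |s| < 1 := abs_lt.2 ⟨h1, h2⟩
  have hr0 : 0 < r := by positivity
  have hsr : |s| < r := by rw [hr]; linarith
  have hr1 : r < 1 := by rw [hr]; linarith
  set u : ℕ → ℝ := fun k => r ^ k with hu_def
  set g : ℕ → ℝ → ℝ := fun k y => asc k * y ^ (2 * k + 1) with hg_def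
  set g' : ℕ → ℝ → ℝ := fun k y => asb k * y ^ (2 * k) with hg'_def
  have hu : Summable u := summable_geometric_of_lt_one hr0.le hr1
  have hg : ∀ k y, y ∈ Ioo (-r) r → HasDerivAt (g k) (g' k y) y := by
    intro k y _
    have h := (hasDerivAt_pow (2 * k + 1) y).const_mul (asc k)
    have heq : asc k * (((2 * k + 1 : ℕ) : ℝ) * y ^ (2 * k + 1 - 1)) = asb k * y ^ (2 * k) := by
      rw [show 2 * k + 1 - 1 = 2 * k from rfl, ← asc_mul k]
      push_cast
      ring
    simp only [hg_def, hg'_def]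
    exact heq ▸ h
  have hg' : ∀ k y, y ∈ Ioo (-r) r → ‖g' k y‖ ≤ u k := by
    intro k y hy
    have hyr : |y| ≤ r := le_of_lt (abs_lt.2 ⟨hy.1, hy.2⟩)
    rw [hg'_def, hu_def]
    simp only [norm_mul, norm_pow, Real.norm_eq_abs]
    rw [abs_of_pos (asb_pos k)]
    have e2 : |y| ^ (2 * k) ≤ r ^ k := by
      calc |y| ^ (2 * k) ≤ |y| ^ k := pow_le_pow_of_le_one (abs_nonneg y) (hyr.trans hr1.le) (by omega)
        _ ≤ r ^ k := pow_le_pow_left₀ (abs_nonneg y) hyr k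
    have hp : (0:ℝ) ≤ |y| ^ (2*k) := by positivity
    nlinarith [asb_le_one k, asb_pos k]
  have hy₀ : (0:ℝ) ∈ Ioo (-r) r := ⟨by linarith, hr0⟩
  have hg0 : Summable (fun k => g k 0) := by
    apply Summable.congr summable_zero
    intro k
    simp [hg_def]
  have hy : s ∈ Ioo (-r) r := abs_lt.1 hsr
  have := hasDerivAt_tsum_of_isPreconnected hu isOpen_Ioo (convex_Ioo _ _).isPreconnected
    hg hg' hy₀ hg0 hy
  exact this

lemma arcsin_eq {s : ℝ} (hs : |s| < 1) : Real.arcsin s = Ffun s := by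
  have hs' : s ∈ Ioo (-1:ℝ) 1 := abs_lt.1 hs
  have hderiv : ∀ x ∈ Ioo (-1:ℝ) 1, HasDerivAt (fun y => Ffun y - Real.arcsin y) 0 x := by
    intro x hx
    have hx2 : (0:ℝ) < 1 - x^2 := by nlinarith [hx.1, hx.2]
    have ha : HasDerivAt Real.arcsin (1 / Real.sqrt (1 - x ^ 2)) x :=
      Real.hasDerivAt_arcsin (by intro h; rw [h] at hx; exact absurd hx.1 (by norm_num))
        (by intro h; rw [h] at hx; exact absurd hx.2 (by norm_num))
    have hG : Gfun x = 1 / Real.sqrt (1 - x ^ 2) := by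
      have := G_eq hx
      have hq : 0 < Real.sqrt (1 - x^2) := Real.sqrt_pos.2 hx2
      field_simp at this ⊢
      linarith [this]
    have := (hasDerivAt_F hx).sub ha
    rw [hG] at this
    simp at this; exact this
  have h := eq_at_zero hderiv hs'
  have hF0 : Ffun 0 = 0 := by
    rw [Ffun]
    convert tsum_zero with k
    simp
  have h2 : Ffun s - Real.arcsin s = Ffun 0 - Real.arcsin 0 := h
  rw [hF0, Real.arcsin_zero] at h2
  linarith

lemma summable_tail {s : ℝ} (hs : |s| < 1) :
    Summable (fun k : ℕ => asc (k+1) * s ^ (2*(k+1)+1)) :=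
  (summable_F hs).comp_injective Nat.succ_injective

lemma arcsin_tail {s : ℝ} (hs : |s| < 1) :
    Real.arcsin s - s = ∑' k : ℕ, asc (k+1) * s ^ (2*(k+1)+1) := by
  rw [arcsin_eq hs, Ffun, Summable.tsum_eq_zero_add (summable_F hs)]
  simp [asc_zero]

open scoped MatrixOrder in
open Matrix in
lemma pow_rep {n : ℕ} (H : Matrix (Fin n) (Fin n) ℝ) (hH : H.PosSemidef) (m : ℕ) :
    ∃ (ι : Type) (_ : Fintype ι) (f : ι → Fin n → ℝ),
      ∀ i j, H i j ^ (m+1) = ∑ a, f a i * f a j := by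
  obtain ⟨B, hB⟩ := CStarAlgebra.nonneg_iff_eq_star_mul_self.mp hH.nonneg
  have hbase : ∀ i j, H i j = ∑ k, B k i * B k j := by
    intro i j
    rw [hB, Matrix.mul_apply]
    simp [Matrix.conjTranspose_apply]
  induction m with
  | zero =>
    exact ⟨Fin n, inferInstance, fun a i => B a i, by simpa using hbase⟩
  | succ m ih =>
    obtain ⟨ι, hι, f, hf⟩ := ih
    refine ⟨ι × Fin n, @instFintypeProd ι (Fin n) hι _, fun a i => f a.1 i * B a.2 i, ?_⟩
    intro i j
    rw [pow_succ, hf i j, hbase i j, Finset.sum_mul_sum]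
    rw [← Finset.sum_product', Finset.univ_product_univ]
    apply Finset.sum_congr rfl
    intro a _
    simp only []
    ring

open Matrix in
lemma quad_pow_nonneg {n : ℕ} (H : Matrix (Fin n) (Fin n) ℝ) (hH : H.PosSemidef) (m : ℕ)
    (x : Fin n → ℝ) : 0 ≤ ∑ i, ∑ j, x i * x j * H i j ^ (m+1) := by
  obtain ⟨ι, hι, f, hf⟩ := pow_rep H hH m
  have h2 : ∑ i, ∑ j, x i * x j * H i j ^ (m+1)
      = ∑ a, ∑ i, ∑ j, x i * x j * (f a i * f a j) := by
    simp_rw [hf, Finset.mul_sum]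
    exact (Finset.sum_congr rfl fun i _ => Finset.sum_comm).trans Finset.sum_comm
  rw [h2]
  apply Finset.sum_nonneg
  intro a _
  have h1 : (∑ i, x i * f a i) ^ 2 = ∑ i, ∑ j, x i * x j * (f a i * f a j) := by
    rw [sq, Finset.sum_mul_sum]
    exact Finset.sum_congr rfl fun i _ => Finset.sum_congr rfl fun j _ => by ring
  rw [← h1]
  exact sq_nonneg _

open Matrix in
lemma quad_expand {n : ℕ} (M : Matrix (Fin n) (Fin n) ℝ) (x : Fin n → ℝ) :
    dotProduct (star x) (M *ᵥ x) = ∑ i, ∑ j, x i * x j * M i j := by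
  simp only [star_trivial, dotProduct, mulVec, Finset.mul_sum]
  exact Finset.sum_congr rfl fun i _ => Finset.sum_congr rfl fun j _ => by ring

open Matrix in
lemma quad_arcsin_nonneg {n : ℕ} (A : Matrix (Fin n) (Fin n) ℝ) (hA : A.PosSemidef)
    (hb : ∀ i j, |A i j| < 1) (x : Fin n → ℝ) :
    0 ≤ ∑ i, ∑ j, x i * x j * (Real.arcsin (A i j) - A i j) := by
  have hterm : ∀ i j : Fin n, x i * x j * (Real.arcsin (A i j) - A i j)
      = ∑' k : ℕ, x i * x j * (asc (k+1) * A i j ^ (2*(k+1)+1)) := by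
    intro i j
    rw [arcsin_tail (hb i j), tsum_mul_left]
  have hsum : ∀ i j : Fin n, Summable (fun k : ℕ => x i * x j * (asc (k+1) * A i j ^ (2*(k+1)+1))) :=
    fun i j => (summable_tail (hb i j)).mul_left _
  calc (0:ℝ) ≤ ∑' k : ℕ, ∑ i, ∑ j, x i * x j * (asc (k+1) * A i j ^ (2*(k+1)+1)) := by
        apply tsum_nonneg
        intro k
        have : ∑ i, ∑ j, x i * x j * (asc (k+1) * A i j ^ (2*(k+1)+1))
            = asc (k+1) * ∑ i, ∑ j, x i * x j * A i j ^ (2*k+2+1) := by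
          rw [Finset.mul_sum]
          apply Finset.sum_congr rfl; intro i _
          rw [Finset.mul_sum]
          apply Finset.sum_congr rfl; intro j _
          rw [show 2*(k+1)+1 = 2*k+2+1 from by omega]; ring
        rw [this]
        exact mul_nonneg (asc_nonneg (k+1)) (quad_pow_nonneg A hA (2*k+2) x)
    _ = ∑ i, ∑ j, ∑' k : ℕ, x i * x j * (asc (k+1) * A i j ^ (2*(k+1)+1)) := by
        rw [Summable.tsum_finsetSum (fun i _ => summable_sum (fun j _ => hsum i j))]
        exact Finset.sum_congr rfl fun i _ => Summable.tsum_finsetSum (fun j _ => hsum i j)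
    _ = ∑ i, ∑ j, x i * x j * (Real.arcsin (A i j) - A i j) := by
        exact Finset.sum_congr rfl fun i _ => Finset.sum_congr rfl fun j _ => (hterm i j).symm

open Matrix in
lemma entry_abs_le {n : ℕ} (H : Matrix (Fin n) (Fin n) ℝ) (hH : H.PosSemidef)
    (hdiag : ∀ i, H i i = 1) (i j : Fin n) : |H i j| ≤ 1 := by
  have hsym : H j i = H i j := by
    have := hH.1.apply i j
    simpa using this
  have h1 := hH.dotProduct_mulVec_nonneg (Pi.single i 1 + Pi.single j 1)
  have h2 := hH.dotProduct_mulVec_nonneg (Pi.single i 1 - Pi.single j 1)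
  rw [quad_expand] at h1 h2
  simp only [Pi.add_apply, Pi.sub_apply, Pi.single_apply, add_mul, mul_add, sub_mul, mul_sub,
    Finset.sum_add_distrib, Finset.sum_sub_distrib, ite_mul, mul_ite, one_mul, mul_one,
    zero_mul, mul_zero, Finset.sum_ite_eq, Finset.sum_ite_eq', Finset.mem_univ, if_true]
    at h1 h2
  rw [hdiag i, hdiag j, hsym] at h1 h2
  rw [abs_le]
  constructor <;> linarith

open Matrix in
lemma posSemidef_smul' {n : ℕ} {H : Matrix (Fin n) (Fin n) ℝ} (hH : H.PosSemidef)
    {c : ℝ} (hc : 0 ≤ c) : (c • H).PosSemidef := by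
  refine Matrix.PosSemidef.of_dotProduct_mulVec_nonneg ?_ ?_
  · show (c • H)ᴴ = c • H
    rw [conjTranspose_smul, hH.1]
    norm_num
  · intro x
    rw [smul_mulVec, dotProduct_smul, smul_eq_mul]
    exact mul_nonneg hc (hH.dotProduct_mulVec_nonneg x)


end ArcsinAux

/-- If `H` is symmetric PSD with unit diagonal, then the entrywise arcsine
matrix minus `H`, i.e. `arcsin∘H − H`, is positive semidefinite. -/
theorem arcsin_sub_posSemidef {n : ℕ} (H : Matrix (Fin n) (Fin n) ℝ)
    (hH : H.PosSemidef) (hdiag : ∀ i, H i i = 1) :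
    ((Matrix.of fun i j => Real.arcsin (H i j)) - H).PosSemidef := by
  have hsym : ∀ i j, H j i = H i j := by
    intro i j
    have := hH.1.apply i j
    simpa using this
  refine Matrix.PosSemidef.of_dotProduct_mulVec_nonneg ?_ ?_
  · apply Matrix.IsHermitian.sub _ hH.1
    show (Matrix.of fun i j => Real.arcsin (H i j))ᴴ = _
    ext i j
    simp only [conjTranspose_apply, of_apply, star_trivial]
    rw [hsym i j]
  · intro x
    rw [quad_expand]
    set g : ℝ → ℝ := fun c => ∑ i, ∑ j, x i * x j * (Real.arcsin (c * H i j) - c * H i j)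
      with hg
    have hcont : Continuous g := by
      apply continuous_finset_sum; intro i _
      apply continuous_finset_sum; intro j _
      apply Continuous.mul continuous_const
      apply Continuous.sub
      · exact Real.continuous_arcsin.comp (continuous_id.mul continuous_const)
      · exact continuous_id.mul continuous_const
    have hnn : ∀ c : ℝ, 0 ≤ c → c < 1 → 0 ≤ g c := by
      intro c hc0 hc1
      have hA : (c • H).PosSemidef := posSemidef_smul' hH hc0
      have hb : ∀ i j, |(c • H) i j| < 1 := by
        intro i j
        rw [Matrix.smul_apply, smul_eq_mul, abs_mul, abs_of_nonneg hc0]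
        calc c * |H i j| ≤ c * 1 :=
              mul_le_mul_of_nonneg_left (entry_abs_le H hH hdiag i j) hc0
          _ < 1 := by linarith
      have := quad_arcsin_nonneg (c • H) hA hb x
      simpa [Matrix.smul_apply, smul_eq_mul, hg] using this
    have htend : Filter.Tendsto (fun m : ℕ => 1 - 1/((m:ℝ)+1)) Filter.atTop (nhds 1) := by
      have h0 := tendsto_one_div_add_atTop_nhds_zero_nat (𝕜 := ℝ)
      simpa using (tendsto_const_nhds (x := (1:ℝ)) (f := Filter.atTop (α := ℕ))).sub h0
    have hseq : Filter.Tendsto (fun m : ℕ => g (1 - 1/((m:ℝ)+1))) Filter.atTop (nhds (g 1)) :=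
      (hcont.tendsto 1).comp htend
    have hge : 0 ≤ g 1 := by
      apply ge_of_tendsto hseq
      apply Filter.Eventually.of_forall
      intro m
      have hm0 : (0:ℝ) < 1/((m:ℝ)+1) := by positivity
      have hm1 : 1/((m:ℝ)+1) ≤ 1 := by
        rw [div_le_one (by positivity)]
        simp
      exact hnn _ (by linarith) (by linarith)
    have hgoal : g 1 = ∑ i, ∑ j, x i * x j *
        (((Matrix.of fun i j => Real.arcsin (H i j)) - H) i j) := by
      rw [hg]
      apply Finset.sum_congr rfl; intro i _
      apply Finset.sum_congr rfl; intro j _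
      simp [Matrix.sub_apply]
    rw [← hgoal]
    exact hge
end

section
/- If H is an n×n real symmetric positive semidefinite matrix with H_ii = 1 for all i and Q is an n×n real symmetric positive semidefinite matrix, then Tr(Q H) ≤ Tr(Q (arcsin∘H)), where (arcsin∘H)_ij = arcsin(H_ij) denotes the entrywise arcsine of H. -/
open Matrix

open scoped Topology

noncomputable def aCB (k : ℕ) : ℝ := (Nat.centralBinom k : ℝ) / 4 ^ k

lemma aCB_pos (k : ℕ) : 0 < aCB k := by
  apply div_pos (by exact_mod_cast Nat.centralBinom_pos k) (by positivity)

lemma aCB_zero : aCB 0 = 1 := by simp [aCB, Nat.centralBinom]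

lemma aCB_rec (k : ℕ) : (2 * (k : ℝ) + 2) * aCB (k + 1) = (2 * k + 1) * aCB k := by
  have h := Nat.succ_mul_centralBinom_succ k
  have h' : ((k : ℝ) + 1) * (Nat.centralBinom (k + 1) : ℝ)
      = 2 * (2 * k + 1) * (Nat.centralBinom k : ℝ) := by exact_mod_cast h
  have h4 : (4 : ℝ) ^ (k + 1) = 4 * 4 ^ k := by ring
  unfold aCB
  rw [h4]
  field_simp
  nlinarith [h', pow_pos (by norm_num : (0:ℝ) < 4) k]

lemma aCB_succ_le (k : ℕ) : aCB (k + 1) ≤ aCB k := by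
  have h := aCB_rec k
  nlinarith [aCB_pos (k + 1), aCB_pos k]

lemma aCB_le_one (k : ℕ) : aCB k ≤ 1 := by
  induction k with
  | zero => rw [aCB_zero]
  | succ m ih => exact (aCB_succ_le m).trans ih

lemma summable_aCB_pow {u : ℝ} (hu : |u| < 1) : Summable fun k => aCB k * u ^ k := by
  apply Summable.of_norm
  refine Summable.of_nonneg_of_le (fun k => norm_nonneg _) (fun k => ?_)
    (summable_geometric_of_lt_one (abs_nonneg u) hu)
  rw [norm_mul, norm_pow, Real.norm_eq_abs, Real.norm_eq_abs,
    abs_of_pos (aCB_pos k)]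
  calc aCB k * |u| ^ k ≤ 1 * |u| ^ k := by
        apply mul_le_mul_of_nonneg_right (aCB_le_one k) (by positivity)
    _ = |u| ^ k := one_mul _

noncomputable def fCB (u : ℝ) : ℝ := ∑' k, aCB k * u ^ k

lemma hasDerivAt_fCB {u : ℝ} (hu : |u| < 1) :
    HasDerivAt fCB (∑' k, aCB k * (k * u ^ (k - 1))) u := by
  set r : ℝ := (1 + |u|) / 2 with hr
  have hr0 : 0 ≤ r := by positivity
  have hur : |u| < r := by rw [hr]; linarith
  have hr1 : r < 1 := by rw [hr]; linarith
  have hsum : Summable fun k : ℕ => (k : ℝ) * r ^ (k - 1) := by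
    rw [← summable_nat_add_iff 1]
    have h1 : Summable fun k : ℕ => (k:ℝ) * r ^ k := by
      simpa using (summable_pow_mul_geometric_of_norm_lt_one 1
        (by rwa [Real.norm_eq_abs, abs_of_nonneg hr0]) : Summable fun k : ℕ => (k:ℝ)^1 * r ^ k)
    have h2 := summable_geometric_of_lt_one hr0 hr1
    refine (h1.add h2).congr fun k => ?_
    push_cast
    ring
  refine hasDerivAt_tsum_of_isPreconnected hsum Metric.isOpen_ball
    (convex_ball (0:ℝ) r).isPreconnected
    (g := fun k y => aCB k * y ^ k) (g' := fun k y => aCB k * ((k : ℝ) * y ^ (k - 1)))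
    (fun k y _ => (hasDerivAt_pow k y).const_mul (aCB k)) (fun k y hy => ?_)
    (Metric.mem_ball_self (lt_of_le_of_lt (abs_nonneg u) hur))
    ?_ (by simpa [Real.norm_eq_abs] using hur)
  · rw [Real.norm_eq_abs, abs_mul, abs_mul, abs_of_pos (aCB_pos k), abs_of_nonneg
      (by positivity : (0:ℝ) ≤ (k:ℝ)), abs_pow]
    have hyr : |y| ≤ r := by
      have := mem_ball_iff_norm.mp hy
      simp only [sub_zero, Real.norm_eq_abs] at this
      linarith
    calc aCB k * ((k:ℝ) * |y| ^ (k-1)) ≤ 1 * ((k:ℝ) * r ^ (k-1)) := by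
          apply mul_le_mul (aCB_le_one k) _ (by positivity) one_pos.le
          exact mul_le_mul_of_nonneg_left (pow_le_pow_left₀ (abs_nonneg y) hyr _) (by positivity)
      _ = (k:ℝ) * r ^ (k-1) := one_mul _
  · simpa using (summable_aCB_pow (by simpa using lt_of_le_of_lt (abs_nonneg u) hur)
      : Summable fun k => aCB k * (0:ℝ) ^ k)


lemma summable_deriv_aCB {v : ℝ} (hv : |v| < 1) :
    Summable fun k : ℕ => aCB k * ((k : ℝ) * v ^ (k - 1)) := by
  apply Summable.of_norm
  have hsum : Summable fun k : ℕ => (k : ℝ) * |v| ^ (k - 1) := by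
    rw [← summable_nat_add_iff 1]
    have h1 : Summable fun k : ℕ => (k:ℝ) * |v| ^ k := by
      simpa using (summable_pow_mul_geometric_of_norm_lt_one 1
        (by rwa [Real.norm_eq_abs, abs_abs]) : Summable fun k : ℕ => (k:ℝ)^1 * |v| ^ k)
    have h2 := summable_geometric_of_lt_one (abs_nonneg v) hv
    refine (h1.add h2).congr fun k => ?_
    push_cast
    ring
  refine Summable.of_nonneg_of_le (fun k => norm_nonneg _) (fun k => ?_) hsum
  rw [Real.norm_eq_abs, abs_mul, abs_mul, abs_of_pos (aCB_pos k),
    abs_of_nonneg (by positivity : (0:ℝ) ≤ (k:ℝ)), abs_pow]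
  calc aCB k * ((k:ℝ) * |v| ^ (k-1)) ≤ 1 * ((k:ℝ) * |v| ^ (k-1)) :=
        mul_le_mul_of_nonneg_right (aCB_le_one k) (by positivity)
    _ = (k:ℝ) * |v| ^ (k-1) := one_mul _

lemma fCB_key {v : ℝ} (hv : |v| < 1) :
    fCB v = 2 * (1 - v) * ∑' k, aCB k * ((k : ℝ) * v ^ (k - 1)) := by
  set g : ℕ → ℝ := fun k => aCB k * ((k : ℝ) * v ^ (k - 1)) with hg
  set D : ℝ := ∑' k, g k with hDdef
  have hDsum : HasSum g D := (summable_deriv_aCB hv).hasSum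
  have h1 : HasSum (fun k => g (k + 1)) (D - g 0) := by
    rw [hasSum_nat_add_iff 1]
    simpa using hDsum
  have hg0 : g 0 = 0 := by simp [hg]
  rw [hg0, sub_zero] at h1
  have h1' : HasSum (fun k => aCB (k+1) * (((k:ℝ)+1) * v ^ k)) D := by
    refine h1.congr_fun fun k => ?_
    simp [hg]
  have h3 : HasSum (fun k => aCB k * ((k:ℝ) * v ^ k)) (v * D) := by
    refine (hDsum.mul_left v).congr_fun fun k => ?_
    cases k with
    | zero => simp [hg]
    | succ m =>
      simp only [hg, Nat.add_sub_cancel]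
      push_cast
      ring
  have h4 := (h1'.mul_left 2).sub (h3.mul_left 2)
  have h5 : HasSum (fun k => aCB k * v ^ k) (2 * D - 2 * (v * D)) := by
    refine h4.congr_fun fun k => ?_
    have hr := aCB_rec k
    linear_combination (-(v ^ k)) * hr
  have h6 : HasSum (fun k => aCB k * v ^ k) (fCB v) := (summable_aCB_pow hv).hasSum
  have h7 := h5.unique h6
  rw [← h7]
  ring

lemma fCB_zero : fCB 0 = 1 := by
  rw [fCB, tsum_eq_single 0 (fun k hk => by simp [zero_pow hk])]
  simp [aCB_zero]

lemma fCB_eq {u : ℝ} (hu : |u| < 1) : fCB u = 1 / Real.sqrt (1 - u) := by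
  set h : ℝ → ℝ := fun y => fCB y * Real.sqrt (1 - y) with hh
  have key : ∀ v ∈ Set.Ioo (-1:ℝ) 1, HasDerivWithinAt h 0 (Set.Ioo (-1:ℝ) 1) v := by
    intro v hv
    have hv' : |v| < 1 := abs_lt.mpr ⟨hv.1, hv.2⟩
    have h1v : (0:ℝ) < 1 - v := by linarith [hv.2]
    set s : ℝ := Real.sqrt (1 - v) with hs
    have hs0 : 0 < s := Real.sqrt_pos.mpr h1v
    have hs2 : s ^ 2 = 1 - v := Real.sq_sqrt h1v.le
    have hf := hasDerivAt_fCB hv'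
    have hsq : HasDerivAt (fun y : ℝ => Real.sqrt (1 - y)) (1 / (2 * s) * (-1)) v := by
      have := (Real.hasDerivAt_sqrt h1v.ne').comp v ((hasDerivAt_id v).const_sub 1)
      simpa [hs, Function.comp_def] using this
    have hprod := hf.mul hsq
    have hval : (∑' k, aCB k * ((k:ℝ) * v ^ (k-1))) * Real.sqrt (1 - v)
        + fCB v * (1 / (2 * s) * (-1)) = 0 := by
      rw [fCB_key hv', ← hs]
      set D : ℝ := ∑' k, aCB k * ((k:ℝ) * v ^ (k-1))
      field_simp
      linear_combination D * hs2
    rw [hval] at hprod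
    exact hprod.hasDerivWithinAt
  have hmem0 : (0:ℝ) ∈ Set.Ioo (-1:ℝ) 1 := by constructor <;> norm_num
  have hmemu : u ∈ Set.Ioo (-1:ℝ) 1 := Set.mem_Ioo.mpr (abs_lt.mp hu)
  have := Convex.norm_image_sub_le_of_norm_hasDerivWithin_le (C := 0) (f' := fun _ => (0:ℝ))
    key (fun x _ => by simp) (convex_Ioo _ _) hmem0 hmemu
  simp only [zero_mul, norm_le_zero_iff, sub_eq_zero] at this
  have h1u : (0:ℝ) < 1 - u := by linarith [(abs_lt.mp hu).2]
  have hsu : Real.sqrt (1 - u) ≠ 0 := (Real.sqrt_pos.mpr h1u).ne'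
  have heq : fCB u * Real.sqrt (1 - u) = 1 := by
    rw [hh] at this
    simpa [fCB_zero] using this
  rw [eq_div_iff hsu]
  exact heq

noncomputable def asT (k : ℕ) (t : ℝ) : ℝ := aCB k / (2 * k + 1) * t ^ (2 * k + 1)

lemma summable_asT {t : ℝ} (ht : |t| < 1) : Summable fun k => asT k t := by
  apply Summable.of_norm
  refine Summable.of_nonneg_of_le (fun k => norm_nonneg _) (fun k => ?_)
    (summable_geometric_of_lt_one (abs_nonneg t) ht)
  rw [asT, norm_mul, norm_pow, Real.norm_eq_abs, Real.norm_eq_abs]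
  have h1 : |aCB k / (2 * (k:ℝ) + 1)| ≤ 1 := by
    rw [abs_of_pos (div_pos (aCB_pos k) (by positivity))]
    rw [div_le_one (by positivity)]
    have := aCB_le_one k
    linarith
  have h2 : |t| ^ (2 * k + 1) ≤ |t| ^ k :=
    pow_le_pow_of_le_one (abs_nonneg t) ht.le (by omega)
  calc |aCB k / (2*(k:ℝ)+1)| * |t| ^ (2*k+1) ≤ 1 * |t| ^ k :=
        mul_le_mul h1 h2 (by positivity) one_pos.le
    _ = |t| ^ k := one_mul _

lemma hasDerivAt_asT_sum {t : ℝ} (ht : |t| < 1) :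
    HasDerivAt (fun y => ∑' k, asT k y) (1 / Real.sqrt (1 - t ^ 2)) t := by
  set r : ℝ := (1 + |t|) / 2 with hr
  have hr0 : 0 ≤ r := by positivity
  have htr : |t| < r := by rw [hr]; linarith
  have hr1 : r < 1 := by rw [hr]; linarith
  have hsum : Summable fun k : ℕ => (r ^ 2) ^ k :=
    summable_geometric_of_lt_one (by positivity) (by nlinarith)
  have hderiv : ∀ (k : ℕ) (y : ℝ),
      HasDerivAt (fun y => asT k y) (aCB k * (y ^ 2) ^ k) y := by
    intro k y
    have h := (hasDerivAt_pow (2 * k + 1) y).const_mul (aCB k / (2 * (k:ℝ) + 1))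
    refine h.congr_deriv ?_
    rw [show 2 * k + 1 - 1 = 2 * k from rfl, ← pow_mul]
    have h21 : (2 * (k:ℝ) + 1) ≠ 0 := ne_of_gt (by positivity)
    push_cast
    field_simp
  have key := hasDerivAt_tsum_of_isPreconnected hsum Metric.isOpen_ball
    (convex_ball (0:ℝ) r).isPreconnected
    (g := fun k y => asT k y) (g' := fun k y => aCB k * (y ^ 2) ^ k)
    (fun k y _ => hderiv k y) (fun k y hy => ?_)
    (Metric.mem_ball_self (lt_of_le_of_lt (abs_nonneg t) htr))
    ?_ (by simpa [Real.norm_eq_abs] using htr)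
  · have heq : (∑' k, aCB k * (t ^ 2) ^ k) = 1 / Real.sqrt (1 - t ^ 2) := by
      have ht2 : |t ^ 2| < 1 := by
        rw [abs_pow, sq_abs]
        nlinarith [abs_nonneg t, sq_abs t]
      have := fCB_eq ht2
      rw [fCB] at this
      rw [this]
    rw [← heq]
    exact key
  · rw [Real.norm_eq_abs, abs_mul, abs_of_pos (aCB_pos k), abs_pow, abs_pow]
    have hyr : |y| ≤ r := by
      have := mem_ball_iff_norm.mp hy
      simp only [sub_zero, Real.norm_eq_abs] at this
      linarith
    calc aCB k * (|y| ^ 2) ^ k ≤ 1 * (r ^ 2) ^ k := by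
          apply mul_le_mul (aCB_le_one k) _ (by positivity) one_pos.le
          apply pow_le_pow_left₀ (by positivity)
          nlinarith [abs_nonneg y]
      _ = (r ^ 2) ^ k := one_mul _
  · exact summable_asT (by simpa using lt_of_le_of_lt (abs_nonneg t) htr)

lemma asT_tsum_eq_arcsin {t : ℝ} (ht : |t| < 1) :
    (∑' k, asT k t) = Real.arcsin t := by
  set h : ℝ → ℝ := fun y => (∑' k, asT k y) - Real.arcsin y with hh
  have key : ∀ v ∈ Set.Ioo (-1:ℝ) 1, HasDerivWithinAt h 0 (Set.Ioo (-1:ℝ) 1) v := by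
    intro v hv
    have hv' : |v| < 1 := abs_lt.mpr ⟨hv.1, hv.2⟩
    have h1 := hasDerivAt_asT_sum hv'
    have h2 := Real.hasDerivAt_arcsin (x := v) (ne_of_gt hv.1) (ne_of_lt hv.2)
    have h3 := h1.sub h2
    rw [sub_self] at h3
    exact h3.hasDerivWithinAt
  have hmem0 : (0:ℝ) ∈ Set.Ioo (-1:ℝ) 1 := by constructor <;> norm_num
  have hmemt : t ∈ Set.Ioo (-1:ℝ) 1 := Set.mem_Ioo.mpr (abs_lt.mp ht)
  have := Convex.norm_image_sub_le_of_norm_hasDerivWithin_le (C := 0) (f' := fun _ => (0:ℝ))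
    key (fun x _ => by simp) (convex_Ioo _ _) hmem0 hmemt
  simp only [zero_mul, norm_le_zero_iff, sub_eq_zero] at this
  have hsum0 : (∑' k, asT k 0) = 0 := by
    have hz : (fun k => asT k (0:ℝ)) = fun _ => (0:ℝ) := funext fun k => by simp [asT]
    rw [hz, tsum_zero]
  have h0 : h 0 = 0 := by simp [hh, hsum0]
  rw [h0] at this
  have heq : (∑' k, asT k t) - Real.arcsin t = 0 := this
  linarith

open Filter in
lemma partial_aCB_le (N : ℕ) :
    ∑ k ∈ Finset.range N, aCB k / (2 * (k:ℝ) + 1) ≤ Real.pi / 2 := by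
  set P : ℝ → ℝ := fun t => ∑ k ∈ Finset.range N, aCB k / (2 * (k:ℝ) + 1) * t ^ (2 * k + 1)
    with hP
  have hcont : Continuous P := by
    apply continuous_finset_sum
    intro k _
    exact continuous_const.mul (continuous_pow _)
  have htend : Tendsto P (nhdsWithin 1 (Set.Iio 1)) (nhds (P 1)) :=
    (hcont.tendsto 1).mono_left nhdsWithin_le_nhds
  have hev : ∀ᶠ t in nhdsWithin (1:ℝ) (Set.Iio 1), P t ≤ Real.pi / 2 := by
    filter_upwards [Ioo_mem_nhdsLT_of_mem (Set.mem_Ioc.mpr ⟨zero_lt_one, le_refl (1:ℝ)⟩)]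
      with t htI
    have ht1 : |t| < 1 := abs_lt.mpr ⟨by linarith [htI.1], htI.2⟩
    have hle : P t ≤ ∑' k, asT k t := by
      apply Summable.sum_le_tsum _ _ (summable_asT ht1)
      intro k _
      have h0t : (0:ℝ) ≤ t := htI.1.le
      have := aCB_pos k
      simp only [asT]
      positivity
    rw [asT_tsum_eq_arcsin ht1] at hle
    exact hle.trans (Real.arcsin_le_pi_div_two t)
  have := le_of_tendsto htend hev
  have hP1 : P 1 = ∑ k ∈ Finset.range N, aCB k / (2 * (k:ℝ) + 1) := by
    simp [hP]
  rwa [hP1] at this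

lemma summable_aCB_div : Summable fun k => aCB k / (2 * (k:ℝ) + 1) :=
  summable_of_sum_range_le (fun k => by have := aCB_pos k; positivity) partial_aCB_le

open Filter in
lemma tsum_aCB_div : (∑' k, aCB k / (2 * (k:ℝ) + 1)) = Real.pi / 2 := by
  apply le_antisymm
  · exact Summable.tsum_le_of_sum_range_le summable_aCB_div partial_aCB_le
  · have htend : Tendsto Real.arcsin (nhdsWithin 1 (Set.Iio 1)) (nhds (Real.pi / 2)) := by
      have := (Real.continuous_arcsin.tendsto 1).mono_left
        (nhdsWithin_le_nhds (s := Set.Iio (1:ℝ)))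
      rwa [Real.arcsin_one] at this
    apply le_of_tendsto htend
    filter_upwards [Ioo_mem_nhdsLT_of_mem (Set.mem_Ioc.mpr ⟨zero_lt_one, le_refl (1:ℝ)⟩)]
      with t htI
    have ht1 : |t| < 1 := abs_lt.mpr ⟨by linarith [htI.1], htI.2⟩
    rw [← asT_tsum_eq_arcsin ht1]
    apply Summable.tsum_le_tsum _ (summable_asT ht1) summable_aCB_div
    intro k
    rw [asT]
    have h1 : t ^ (2 * k + 1) ≤ 1 := pow_le_one₀ htI.1.le htI.2.le
    have h2 : (0:ℝ) < aCB k / (2 * (k:ℝ) + 1) := div_pos (aCB_pos k) (by positivity)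
    nlinarith

lemma hasSum_arcsin {t : ℝ} (ht : |t| ≤ 1) :
    HasSum (fun k => aCB k / (2 * (k:ℝ) + 1) * t ^ (2 * k + 1)) (Real.arcsin t) := by
  rcases lt_or_eq_of_le ht with h | h
  · have := (summable_asT h).hasSum
    rwa [asT_tsum_eq_arcsin h] at this
  · rcases (abs_eq (by norm_num : (0:ℝ) ≤ 1)).mp h with h1 | h1
    · subst h1
      have := summable_aCB_div.hasSum
      rw [tsum_aCB_div] at this
      rw [Real.arcsin_one]
      simpa using this
    · subst h1
      have := summable_aCB_div.hasSum.neg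
      rw [tsum_aCB_div] at this
      rw [Real.arcsin_neg_one]
      refine this.congr_fun fun k => ?_
      rw [show (-1:ℝ) ^ (2 * k + 1) = -1 from Odd.neg_one_pow ⟨k, by ring⟩]
      ring

open Matrix in
lemma qf_nonneg_of_posSemidef {n : ℕ} {M : Matrix (Fin n) (Fin n) ℝ} (hM : M.PosSemidef)
    (x : Fin n → ℝ) : 0 ≤ ∑ i, ∑ j, x i * x j * M i j := by
  have h := hM.dotProduct_mulVec_nonneg x
  simp only [dotProduct, mulVec, Pi.star_apply, star_trivial, RCLike.re_to_real] at h
  calc (0:ℝ) ≤ _ := h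
    _ = ∑ i, ∑ j, x i * x j * M i j := by
      refine Finset.sum_congr rfl fun i _ => ?_
      rw [Finset.mul_sum]
      exact Finset.sum_congr rfl fun j _ => by ring

open Matrix in
lemma Matrix.posSemidef_iff_eq_transpose_mul_self {n : ℕ} {A : Matrix (Fin n) (Fin n) ℝ} :
    A.PosSemidef ↔ ∃ B : Matrix (Fin n) (Fin n) ℝ, A = Bᴴ * B := by
  open scoped MatrixOrder in
  constructor
  · intro hA
    obtain ⟨B, hB⟩ := CStarAlgebra.nonneg_iff_eq_star_mul_self.mp hA.nonneg
    exact ⟨B, hB⟩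
  · rintro ⟨B, rfl⟩
    exact Matrix.posSemidef_conjTranspose_mul_self B

open Matrix in
lemma qf_schur_step {n : ℕ} {H : Matrix (Fin n) (Fin n) ℝ} (hH : H.PosSemidef)
    (P : Fin n → Fin n → ℝ) (hP : ∀ x : Fin n → ℝ, 0 ≤ ∑ i, ∑ j, x i * x j * P i j)
    (x : Fin n → ℝ) : 0 ≤ ∑ i, ∑ j, x i * x j * (P i j * H i j) := by
  obtain ⟨B, hB⟩ := Matrix.posSemidef_iff_eq_transpose_mul_self.mp hH
  have hHij : ∀ i j, H i j = ∑ l, B l i * B l j := by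
    intro i j
    rw [hB]
    simp [Matrix.mul_apply, Matrix.conjTranspose_apply]
  have hstep : ∑ i, ∑ j, x i * x j * (P i j * H i j)
      = ∑ l, ∑ i, ∑ j, (x i * B l i) * (x j * B l j) * P i j := by
    calc ∑ i, ∑ j, x i * x j * (P i j * H i j)
        = ∑ i, ∑ j, ∑ l, (x i * B l i) * (x j * B l j) * P i j := by
          refine Finset.sum_congr rfl fun i _ => Finset.sum_congr rfl fun j _ => ?_
          rw [hHij i j, Finset.mul_sum, Finset.mul_sum]
          exact Finset.sum_congr rfl fun l _ => by ring
      _ = ∑ i, ∑ l, ∑ j, (x i * B l i) * (x j * B l j) * P i j :=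
          Finset.sum_congr rfl fun i _ => Finset.sum_comm
      _ = ∑ l, ∑ i, ∑ j, (x i * B l i) * (x j * B l j) * P i j := Finset.sum_comm
  rw [hstep]
  exact Finset.sum_nonneg fun l _ => hP fun i => x i * B l i

open Matrix in
lemma qf_pow_nonneg {n : ℕ} {H : Matrix (Fin n) (Fin n) ℝ} (hH : H.PosSemidef) (m : ℕ)
    (x : Fin n → ℝ) : 0 ≤ ∑ i, ∑ j, x i * x j * H i j ^ (m + 1) := by
  induction m generalizing x with
  | zero => simpa using qf_nonneg_of_posSemidef hH x
  | succ p ih =>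
    have := qf_schur_step hH (fun i j => H i j ^ (p + 1)) ih x
    simpa [← pow_succ] using this

open Matrix in
lemma trace_mul_psd_nonneg {n : ℕ} {Q M : Matrix (Fin n) (Fin n) ℝ}
    (hQ : Q.PosSemidef) (hM : M.PosSemidef) : 0 ≤ (Q * M).trace := by
  obtain ⟨B, rfl⟩ := Matrix.posSemidef_iff_eq_transpose_mul_self.mp hM
  have h1 : (Q * (Bᴴ * B)).trace = (B * Q * Bᴴ).trace := by
    rw [← Matrix.mul_assoc, Matrix.trace_mul_comm, ← Matrix.mul_assoc]
  rw [h1]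
  have h2 : (B * Q * Bᴴ).PosSemidef := hQ.mul_mul_conjTranspose_same B
  rw [Matrix.trace]
  apply Finset.sum_nonneg
  intro i _
  have := h2.dotProduct_mulVec_nonneg (Pi.single i 1)
  simpa [dotProduct_single, single_dotProduct, Matrix.mulVec_single]
    using this

open Matrix in
lemma entry_abs_le_one {n : ℕ} {H : Matrix (Fin n) (Fin n) ℝ} (hH : H.PosSemidef)
    (hdiag : ∀ i, H i i = 1) (i j : Fin n) : |H i j| ≤ 1 := by
  rcases eq_or_ne i j with rfl | hij
  · rw [hdiag i]; norm_num
  · have hsym : H j i = H i j := by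
      have := hH.1
      calc H j i = Hᴴ i j := by simp [Matrix.conjTranspose_apply]
        _ = H i j := by rw [this]
    rw [abs_le]
    constructor
    · have h := hH.dotProduct_mulVec_nonneg (Pi.single i 1 + Pi.single j 1)
      simp only [star_trivial, Matrix.mulVec_add, dotProduct_add,
        add_dotProduct, Matrix.mulVec_single, dotProduct_single,
        single_dotProduct, RCLike.re_to_real] at h
      simp only [Pi.single_apply, mul_one, one_mul, mul_ite, ite_mul, zero_mul, mul_zero,
        Finset.sum_ite_eq', Finset.mem_univ, if_true, Pi.smul_apply, op_smul_eq_mul,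
        Matrix.col_apply] at h
      rw [hdiag i, hdiag j, hsym] at h
      linarith
    · have h := hH.dotProduct_mulVec_nonneg (Pi.single i 1 - Pi.single j 1)
      simp only [star_trivial, Matrix.mulVec_sub, dotProduct_sub,
        sub_dotProduct, Matrix.mulVec_single, dotProduct_single,
        single_dotProduct, RCLike.re_to_real] at h
      simp only [Pi.single_apply, mul_one, one_mul, mul_ite, ite_mul, zero_mul, mul_zero,
        Finset.sum_ite_eq', Finset.mem_univ, if_true, Pi.smul_apply, op_smul_eq_mul,
        Matrix.col_apply] at h
      rw [hdiag i, hdiag j, hsym] at h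
      linarith

open Matrix in
lemma dot_eq_double_sum {n : ℕ} (M : Matrix (Fin n) (Fin n) ℝ) (x : Fin n → ℝ) :
    star x ⬝ᵥ M *ᵥ x = ∑ i, ∑ j, x i * x j * M i j := by
  simp only [dotProduct, mulVec, Pi.star_apply, star_trivial]
  refine Finset.sum_congr rfl fun i _ => ?_
  rw [Finset.mul_sum]
  exact Finset.sum_congr rfl fun j _ => by ring

/-- If `H` is symmetric PSD with unit diagonal and `Q` is symmetric PSD,
then `Tr(Q H) ≤ Tr(Q (arcsin∘H))`, where `arcsin∘H` is the entrywise arcsine of `H`. -/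
theorem trace_le_trace_arcsin {n : ℕ} (H : Matrix (Fin n) (Fin n) ℝ)
    (hH : H.PosSemidef) (hdiag : ∀ i, H i i = 1)
    (Q : Matrix (Fin n) (Fin n) ℝ) (hQ : Q.PosSemidef) :
    (Q * H).trace ≤ (Q * Matrix.of fun i j => Real.arcsin (H i j)).trace := by
  set A : Matrix (Fin n) (Fin n) ℝ := Matrix.of fun i j => Real.arcsin (H i j) with hA
  have hsym : ∀ i j, H j i = H i j := by
    intro i j
    calc H j i = Hᴴ i j := by simp [Matrix.conjTranspose_apply]
      _ = H i j := by rw [hH.1]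
  -- entrywise series for arcsin (H i j) - H i j
  have hterm : ∀ i j, HasSum
      (fun k => aCB (k+1) / (2 * ((k:ℝ)+1) + 1) * H i j ^ (2 * (k+1) + 1))
      (Real.arcsin (H i j) - H i j) := by
    intro i j
    have h0 := hasSum_arcsin (entry_abs_le_one hH hdiag i j)
    have hcast : ∀ k : ℕ, aCB (k+1) / (2 * ((k:ℝ)+1) + 1) * H i j ^ (2 * (k+1) + 1)
        = aCB (k+1) / (2 * ((k+1 : ℕ):ℝ) + 1) * H i j ^ (2 * (k+1) + 1) := by
      intro k; push_cast; ring_nf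
    rw [show (fun k => aCB (k+1) / (2 * ((k:ℝ)+1) + 1) * H i j ^ (2 * (k+1) + 1))
      = fun k => aCB (k+1) / (2 * ((k+1:ℕ):ℝ) + 1) * H i j ^ (2 * (k+1) + 1)
      from funext hcast]
    rw [hasSum_nat_add_iff (f := fun k => aCB k / (2 * (k:ℝ) + 1) * H i j ^ (2 * k + 1)) 1]
    have : Real.arcsin (H i j) - H i j
        + ∑ k ∈ Finset.range 1, aCB k / (2 * (k:ℝ) + 1) * H i j ^ (2 * k + 1)
        = Real.arcsin (H i j) := by
      simp [aCB_zero]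
    rw [this]
    exact h0
  -- positive semidefiniteness of A - H
  have hPSD : (A - H).PosSemidef := by
    refine Matrix.PosSemidef.of_dotProduct_mulVec_nonneg ?_ ?_
    · ext i j
      simp only [Matrix.conjTranspose_apply, Matrix.sub_apply, hA, Matrix.of_apply,
        star_trivial]
      rw [hsym i j]
    · intro x
      rw [dot_eq_double_sum]
      have hsumQF : HasSum
          (fun k => ∑ i, ∑ j, x i * x j
            * (aCB (k+1) / (2 * ((k:ℝ)+1) + 1) * H i j ^ (2 * (k+1) + 1)))
          (∑ i, ∑ j, x i * x j * ((A - H) i j)) := by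
        have inner : ∀ i : Fin n, HasSum
            (fun k => ∑ j, x i * x j
              * (aCB (k+1) / (2 * ((k:ℝ)+1) + 1) * H i j ^ (2 * (k+1) + 1)))
            (∑ j, x i * x j * ((A - H) i j)) := by
          intro i
          apply hasSum_sum
          intro j _
          have := (hterm i j).mul_left (x i * x j)
          simpa [hA, Matrix.sub_apply, mul_sub] using this
        exact hasSum_sum (s := (Finset.univ : Finset (Fin n))) (fun i _ => inner i)
      refine hasSum_le (fun k => ?_) hasSum_zero hsumQF
      have hc : 0 ≤ aCB (k+1) / (2 * ((k:ℝ)+1) + 1) :=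
        le_of_lt (div_pos (aCB_pos (k+1)) (by positivity))
      have hq := qf_pow_nonneg hH (2 * (k + 1)) x
      calc (0:ℝ) ≤ aCB (k+1) / (2 * ((k:ℝ)+1) + 1)
            * ∑ i, ∑ j, x i * x j * H i j ^ (2 * (k + 1) + 1) := mul_nonneg hc hq
        _ = ∑ i, ∑ j, x i * x j
            * (aCB (k+1) / (2 * ((k:ℝ)+1) + 1) * H i j ^ (2 * (k+1) + 1)) := by
          rw [Finset.mul_sum]
          refine Finset.sum_congr rfl fun i _ => ?_
          rw [Finset.mul_sum]
          exact Finset.sum_congr rfl fun j _ => by ring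
  have htr := trace_mul_psd_nonneg hQ hPSD
  rw [Matrix.mul_sub, Matrix.trace_sub] at htr
  linarith
end

section
/- (Grothendieck's identity.) Let ρ ∈ [−1,1], let Z₁ and Z₂ be independent standard Gaussian real random variables, and set X = Z₁ and Y = ρ·Z₁ + √(1−ρ²)·Z₂, so that (X,Y) is a centered bivariate Gaussian pair with unit variances and correlation ρ. Then 𝔼[sgn(X)·sgn(Y)] = (2/π)·arcsin(ρ). -/
open MeasureTheory ProbabilityTheory

noncomputable section

/-- The sign function: `sgn t = 1` if `t > 0`, else `-1`. -/
def signum (t : ℝ) : ℝ := if 0 < t then 1 else -1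

open Real Set Filter
open scoped NNReal ENNReal

lemma signum_of_pos {t : ℝ} (h : 0 < t) : signum t = 1 := if_pos h

lemma signum_of_neg {t : ℝ} (h : t < 0) : signum t = -1 := if_neg (not_lt.2 h.le)

lemma signum_mul_left {r t : ℝ} (hr : 0 < r) : signum (r * t) = signum t := by
  unfold signum
  rcases lt_trichotomy t 0 with h | rfl | h
  · rw [if_neg (not_lt.2 (mul_nonpos_of_nonneg_of_nonpos hr.le h.le)), if_neg (not_lt.2 h.le)]
  · simp
  · rw [if_pos (mul_pos hr h), if_pos h]

lemma abs_signum_le (t : ℝ) : |signum t| ≤ 1 := by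
  unfold signum; split_ifs <;> simp

lemma measurable_signum : Measurable signum := by
  unfold signum
  exact Measurable.ite measurableSet_Ioi measurable_const measurable_const

/-- The angular integrand. -/
lemma measurable_ang (α : ℝ) :
    Measurable fun θ : ℝ => signum (cos θ) * signum (cos (θ - α)) :=
  (measurable_signum.comp continuous_cos.measurable).mul
    (measurable_signum.comp (continuous_cos.measurable.comp (measurable_id.sub measurable_const)))

lemma intervalIntegrable_ang (α a b : ℝ) :
    IntervalIntegrable (fun θ : ℝ => signum (cos θ) * signum (cos (θ - α))) volume a b := by
  rw [intervalIntegrable_iff]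
  have hone : IntegrableOn (fun _ : ℝ => (1:ℝ)) (Set.uIoc a b) volume :=
    integrableOn_const measure_Ioc_lt_top.ne
  refine Integrable.mono' hone
    ((measurable_ang α).aestronglyMeasurable.restrict) (ae_of_all _ fun θ => ?_)
  rw [Real.norm_eq_abs, abs_mul]
  exact mul_le_one₀ (abs_signum_le _) (abs_nonneg _) (abs_signum_le _)

lemma integral_ang_piece {α a b c : ℝ} (hab : a ≤ b)
    (hc : ∀ θ ∈ Set.Ioo a b, signum (cos θ) * signum (cos (θ - α)) = c) :
    ∫ θ in a..b, signum (cos θ) * signum (cos (θ - α)) = (b - a) * c := by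
  rw [intervalIntegral.integral_of_le hab, integral_Ioc_eq_integral_Ioo,
    setIntegral_congr_fun measurableSet_Ioo hc, setIntegral_const, Real.volume_real_Ioo_of_le hab,
    smul_eq_mul]

lemma cos_neg_left {x : ℝ} (h1 : -(3 * π / 2) < x) (h2 : x < -(π / 2)) : cos x < 0 := by
  rw [← Real.cos_neg]
  exact Real.cos_neg_of_pi_div_two_lt_of_lt (by linarith) (by linarith)

lemma cos_neg_right {x : ℝ} (h1 : π / 2 < x) (h2 : x < 3 * π / 2) : cos x < 0 :=
  Real.cos_neg_of_pi_div_two_lt_of_lt h1 (by linarith)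

lemma cos_pos' {x : ℝ} (h1 : -(π / 2) < x) (h2 : x < π / 2) : 0 < cos x :=
  Real.cos_pos_of_mem_Ioo ⟨h1, h2⟩

lemma angular_integral {α : ℝ} (h0 : 0 ≤ α) (hπ : α ≤ π) :
    ∫ θ in Set.Ioo (-π) π, signum (cos θ) * signum (cos (θ - α)) = 2 * π - 4 * α := by
  have hπ0 := Real.pi_pos
  have key : ∫ θ in (-π)..π, signum (cos θ) * signum (cos (θ - α)) = 2 * π - 4 * α := by
    have hI := intervalIntegrable_ang α
    rcases le_or_gt α (π / 2) with hle | hlt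
    · rw [← intervalIntegral.integral_add_adjacent_intervals (hI (-π) (-(π/2))) (hI (-(π/2)) π),
        ← intervalIntegral.integral_add_adjacent_intervals (hI (-(π/2)) (α - π/2)) (hI (α - π/2) π),
        ← intervalIntegral.integral_add_adjacent_intervals (hI (α - π/2) (π/2)) (hI (π/2) π),
        ← intervalIntegral.integral_add_adjacent_intervals (hI (π/2) (α + π/2)) (hI (α + π/2) π)]
      rw [integral_ang_piece (by linarith) (fun θ hθ => by
        obtain ⟨ha, hb⟩ := hθ
        rw [signum_of_neg (cos_neg_left (by linarith) (by linarith)),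
          signum_of_neg (cos_neg_left (by linarith) (by linarith))])]
      rw [integral_ang_piece (by linarith) (fun θ hθ => by
        obtain ⟨ha, hb⟩ := hθ
        rw [signum_of_pos (cos_pos' (by linarith) (by linarith)),
          signum_of_neg (cos_neg_left (by linarith) (by linarith))])]
      rw [integral_ang_piece (by linarith) (fun θ hθ => by
        obtain ⟨ha, hb⟩ := hθ
        rw [signum_of_pos (cos_pos' (by linarith) (by linarith)),
          signum_of_pos (cos_pos' (by linarith) (by linarith))])]
      rw [integral_ang_piece (by linarith) (fun θ hθ => by
        obtain ⟨ha, hb⟩ := hθ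
        rw [signum_of_neg (cos_neg_right (by linarith) (by linarith)),
          signum_of_pos (cos_pos' (by linarith) (by linarith))])]
      rw [integral_ang_piece (by linarith) (fun θ hθ => by
        obtain ⟨ha, hb⟩ := hθ
        rw [signum_of_neg (cos_neg_right (by linarith) (by linarith)),
          signum_of_neg (cos_neg_right (by linarith) (by linarith))])]
      ring
    · rw [← intervalIntegral.integral_add_adjacent_intervals (hI (-π) (α - 3*π/2)) (hI (α - 3*π/2) π),
        ← intervalIntegral.integral_add_adjacent_intervals (hI (α - 3*π/2) (-(π/2))) (hI (-(π/2)) π),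
        ← intervalIntegral.integral_add_adjacent_intervals (hI (-(π/2)) (α - π/2)) (hI (α - π/2) π),
        ← intervalIntegral.integral_add_adjacent_intervals (hI (α - π/2) (π/2)) (hI (π/2) π)]
      rw [integral_ang_piece (by linarith) (fun θ hθ => by
        obtain ⟨ha, hb⟩ := hθ
        rw [signum_of_neg (cos_neg_left (by linarith) (by linarith)),
          ← Real.cos_add_two_pi (θ - α),
          signum_of_pos (cos_pos' (by linarith) (by linarith))])]
      rw [integral_ang_piece (by linarith) (fun θ hθ => by
        obtain ⟨ha, hb⟩ := hθ
        rw [signum_of_neg (cos_neg_left (by linarith) (by linarith)),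
          signum_of_neg (cos_neg_left (by linarith) (by linarith))])]
      rw [integral_ang_piece (by linarith) (fun θ hθ => by
        obtain ⟨ha, hb⟩ := hθ
        rw [signum_of_pos (cos_pos' (by linarith) (by linarith)),
          signum_of_neg (cos_neg_left (by linarith) (by linarith))])]
      rw [integral_ang_piece (by linarith) (fun θ hθ => by
        obtain ⟨ha, hb⟩ := hθ
        rw [signum_of_pos (cos_pos' (by linarith) (by linarith)),
          signum_of_pos (cos_pos' (by linarith) (by linarith))])]
      rw [integral_ang_piece (by linarith) (fun θ hθ => by
        obtain ⟨ha, hb⟩ := hθ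
        rw [signum_of_neg (cos_neg_right (by linarith) (by linarith)),
          signum_of_pos (cos_pos' (by linarith) (by linarith))])]
      ring
  rw [← key, intervalIntegral.integral_of_le (by linarith), integral_Ioc_eq_integral_Ioo]


lemma radial_integral : ∫ r in Set.Ioi (0:ℝ), r * Real.exp (-(1/2) * r^2) = 1 := by
  have hderiv : ∀ x ∈ Set.Ici (0:ℝ),
      HasDerivAt (fun y : ℝ => -Real.exp (-(1/2) * y^2)) (x * Real.exp (-(1/2) * x^2)) x := by
    intro x _
    have h1 : HasDerivAt (fun y : ℝ => -(1/2) * y^2) (-x) x := by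
      refine ((hasDerivAt_pow 2 x).const_mul (-(1/2:ℝ))).congr_deriv ?_
      push_cast
      ring
    have h2 := (h1.exp).neg
    refine h2.congr_deriv ?_
    ring
  have hint : IntegrableOn (fun r : ℝ => r * Real.exp (-(1/2) * r^2)) (Set.Ioi 0) := by
    have := integrable_mul_exp_neg_mul_sq (b := (1/2:ℝ)) (by norm_num)
    exact this.integrableOn
  have htend : Filter.Tendsto (fun y : ℝ => -Real.exp (-(1/2) * y^2)) Filter.atTop (nhds 0) := by
    rw [show (0:ℝ) = -0 by norm_num]
    refine Filter.Tendsto.neg ?_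
    refine Real.tendsto_exp_atBot.comp ?_
    exact (Filter.tendsto_pow_atTop two_ne_zero).const_mul_atTop_of_neg (by norm_num)
  have := MeasureTheory.integral_Ioi_of_hasDerivAt_of_tendsto' hderiv hint htend
  simpa using this

lemma integral_gaussianReal01 (g : ℝ → ℝ) :
    ∫ x, g x ∂(gaussianReal 0 1) = ∫ x, gaussianPDFReal 0 1 x * g x := by
  rw [gaussianReal_of_var_ne_zero 0 one_ne_zero]
  have h2 : volume.withDensity (gaussianPDF 0 1)
      = volume.withDensity (fun x => ((gaussianPDFReal 0 1 x).toNNReal : ℝ≥0∞)) := rfl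
  rw [h2, integral_withDensity_eq_integral_smul
    ((measurable_gaussianPDFReal 0 1).real_toNNReal) g]
  congr 1
  funext x
  rw [NNReal.smul_def, smul_eq_mul, Real.coe_toNNReal _ (gaussianPDFReal_nonneg 0 1 x)]

lemma pdf_prod_polar (r θ : ℝ) :
    gaussianPDFReal 0 1 (r * Real.cos θ) * gaussianPDFReal 0 1 (r * Real.sin θ)
      = (2 * π)⁻¹ * Real.exp (-(1/2) * r^2) := by
  simp only [gaussianPDFReal, NNReal.coe_one, mul_one, sub_zero]
  rw [mul_mul_mul_comm, ← Real.exp_add, ← mul_inv,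
    Real.mul_self_sqrt (by positivity)]
  congr 1
  have h := Real.sin_sq_add_cos_sq θ
  field_simp
  congr 1
  linear_combination (-(r^2/2)) * h

lemma integral_prod_gaussian (F : ℝ × ℝ → ℝ) (hFm : Measurable F) (hb : ∀ p, |F p| ≤ 1) :
    ∫ p, F p ∂((gaussianReal 0 1).prod (gaussianReal 0 1))
      = ∫ p : ℝ × ℝ, gaussianPDFReal 0 1 p.1 * (gaussianPDFReal 0 1 p.2 * F p) := by
  have hFi : Integrable F ((gaussianReal 0 1).prod (gaussianReal 0 1)) := by
    refine Integrable.mono' (integrable_const 1) hFm.aestronglyMeasurable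
      (ae_of_all _ fun p => ?_)
    simpa [Real.norm_eq_abs] using hb p
  rw [MeasureTheory.integral_prod _ hFi]
  have hinner : ∀ x : ℝ, ∫ y, F (x, y) ∂(gaussianReal 0 1)
      = ∫ y, gaussianPDFReal 0 1 y * F (x, y) := fun x =>
    integral_gaussianReal01 _
  simp_rw [hinner]
  rw [integral_gaussianReal01 (fun x => ∫ y, gaussianPDFReal 0 1 y * F (x, y))]
  have hG : Integrable (fun p : ℝ × ℝ => gaussianPDFReal 0 1 p.1 * (gaussianPDFReal 0 1 p.2 * F p))
      (volume.prod volume) := by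
    refine Integrable.mono' ((integrable_gaussianPDFReal 0 1).mul_prod
      (integrable_gaussianPDFReal 0 1)) ?_ (ae_of_all _ fun p => ?_)
    · exact (((measurable_gaussianPDFReal 0 1).comp measurable_fst).mul
        (((measurable_gaussianPDFReal 0 1).comp measurable_snd).mul hFm)).aestronglyMeasurable
    · rw [Real.norm_eq_abs, abs_mul, abs_mul,
        abs_of_nonneg (gaussianPDFReal_nonneg 0 1 p.1),
        abs_of_nonneg (gaussianPDFReal_nonneg 0 1 p.2)]
      have h1 := gaussianPDFReal_nonneg 0 1 p.1
      have h2 := gaussianPDFReal_nonneg 0 1 p.2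
      have h3 := hb p
      nlinarith [mul_nonneg h1 h2, abs_nonneg (F p)]
  have := MeasureTheory.integral_integral (f := fun x y =>
    gaussianPDFReal 0 1 x * (gaussianPDFReal 0 1 y * F (x, y))) (by exact hG)
  rw [← Measure.volume_eq_prod] at this
  rw [← this]
  congr 1
  funext x
  rw [MeasureTheory.integral_const_mul]


/-- **Grothendieck's identity.** If `Z₁, Z₂` are independent standard Gaussians,
`X = Z₁` and `Y = ρ·Z₁ + √(1−ρ²)·Z₂` with `ρ ∈ [−1,1]`, then
`𝔼[sgn(X)·sgn(Y)] = (2/π)·arcsin ρ`. -/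
theorem grothendieck_identity {Ω : Type*} [MeasurableSpace Ω]
    (P : Measure Ω) [IsProbabilityMeasure P]
    (ρ : ℝ) (hρ : ρ ∈ Set.Icc (-1 : ℝ) 1)
    (Z₁ Z₂ : Ω → ℝ) (hZ₁m : Measurable Z₁) (hZ₂m : Measurable Z₂)
    (hZ₁ : P.map Z₁ = gaussianReal 0 1) (hZ₂ : P.map Z₂ = gaussianReal 0 1)
    (hindep : IndepFun Z₁ Z₂ P)
    (X Y : Ω → ℝ) (hX : X = Z₁)
    (hY : Y = fun ω => ρ * Z₁ ω + Real.sqrt (1 - ρ ^ 2) * Z₂ ω) :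
    ∫ ω, signum (X ω) * signum (Y ω) ∂P = (2 / Real.pi) * Real.arcsin ρ := by
  obtain ⟨hρ1, hρ2⟩ := hρ
  have hπ0 := Real.pi_pos
  set α : ℝ := Real.arccos ρ with hα
  have hα0 : 0 ≤ α := Real.arccos_nonneg ρ
  have hαπ : α ≤ π := Real.arccos_le_pi ρ
  have hcosα : Real.cos α = ρ := Real.cos_arccos hρ1 hρ2
  have hsinα : Real.sin α = Real.sqrt (1 - ρ ^ 2) := Real.sin_arccos ρ
  set F : ℝ × ℝ → ℝ := fun p => signum p.1 * signum (ρ * p.1 + Real.sqrt (1 - ρ ^ 2) * p.2)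
    with hF
  have hFm : Measurable F := (measurable_signum.comp measurable_fst).mul
    (measurable_signum.comp ((measurable_fst.const_mul ρ).add
      (measurable_snd.const_mul (Real.sqrt (1 - ρ ^ 2)))))
  have hFb : ∀ p, |F p| ≤ 1 := fun p => by
    rw [hF, abs_mul]
    exact mul_le_one₀ (abs_signum_le _) (abs_nonneg _) (abs_signum_le _)
  have hmap : P.map (fun ω => (Z₁ ω, Z₂ ω)) = (gaussianReal 0 1).prod (gaussianReal 0 1) := by
    refine ((indepFun_iff_map_prod_eq_prod_map_map hZ₁m.aemeasurable
      hZ₂m.aemeasurable).mp hindep).trans ?_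
    rw [hZ₁, hZ₂]
  have step0 : ∫ ω, signum (X ω) * signum (Y ω) ∂P = ∫ ω, F (Z₁ ω, Z₂ ω) ∂P := by
    refine integral_congr_ae (Filter.Eventually.of_forall fun ω => ?_)
    rw [hX, hY, hF]
  have step1 : ∫ ω, F (Z₁ ω, Z₂ ω) ∂P
      = ∫ p, F p ∂((gaussianReal 0 1).prod (gaussianReal 0 1)) := by
    rw [← hmap, integral_map (hZ₁m.prodMk hZ₂m).aemeasurable hFm.aestronglyMeasurable]
  rw [step0, step1, integral_prod_gaussian F hFm hFb]
  set G : ℝ × ℝ → ℝ := fun p =>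
    gaussianPDFReal 0 1 p.1 * (gaussianPDFReal 0 1 p.2 * F p) with hG
  rw [← integral_comp_polarCoord_symm G]
  have htarget : polarCoord.target = Set.Ioi (0:ℝ) ×ˢ Set.Ioo (-π) π := rfl
  rw [htarget]
  have hpt : ∀ p ∈ Set.Ioi (0:ℝ) ×ˢ Set.Ioo (-π) π,
      p.1 • G (polarCoord.symm p)
        = (p.1 * Real.exp (-(1/2) * p.1 ^ 2)) *
          ((2 * π)⁻¹ * (signum (Real.cos p.2) * signum (Real.cos (p.2 - α)))) := by
    rintro ⟨r, θ⟩ ⟨hr, hθ⟩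
    have hr' : (0:ℝ) < r := hr
    have h2 : ρ * (r * Real.cos θ) + Real.sqrt (1 - ρ ^ 2) * (r * Real.sin θ)
        = r * Real.cos (θ - α) := by
      rw [Real.cos_sub, hcosα, hsinα]; ring
    calc r • G (polarCoord.symm (r, θ))
        = (gaussianPDFReal 0 1 (r * Real.cos θ) * gaussianPDFReal 0 1 (r * Real.sin θ)) *
            (r * (signum (Real.cos θ) * signum (Real.cos (θ - α)))) := by
          rw [hG, polarCoord_symm_apply, hF]
          simp only [smul_eq_mul]
          rw [h2, signum_mul_left hr', signum_mul_left hr']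
          ring
      _ = (r * Real.exp (-(1/2) * r ^ 2)) *
            ((2 * π)⁻¹ * (signum (Real.cos θ) * signum (Real.cos (θ - α)))) := by
          rw [pdf_prod_polar]; ring
  rw [setIntegral_congr_fun (measurableSet_Ioi.prod measurableSet_Ioo) hpt,
    Measure.volume_eq_prod,
    MeasureTheory.setIntegral_prod_mul (fun r : ℝ => r * Real.exp (-(1/2) * r ^ 2))
      (fun θ : ℝ => (2 * π)⁻¹ * (signum (Real.cos θ) * signum (Real.cos (θ - α)))),
    MeasureTheory.integral_const_mul, radial_integral, angular_integral hα0 hαπ,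
    Real.arcsin_eq_pi_div_two_sub_arccos, ← hα]
  field_simp
  ring


end
end

section
/- If A and B are n×n real symmetric positive semidefinite matrices, then every eigenvalue of the product A·B (i.e. every complex root of its characteristic polynomial) is a nonnegative real number. -/
open Matrix Polynomial
open scoped ComplexOrder
open scoped MatrixOrder

private lemma my_eval_charpoly {R : Type*} [CommRing R] {m : ℕ}
    (M : Matrix (Fin m) (Fin m) R) (t : R) :
    M.charpoly.eval t = (Matrix.scalar (Fin m) t - M).det := by
  rw [Matrix.charpoly, ← Polynomial.coe_evalRingHom, RingHom.map_det]
  congr 1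
  ext i j
  by_cases h : i = j <;>
    simp [Matrix.charmatrix_apply, Matrix.scalar_apply, Matrix.diagonal, h]

private lemma my_charpoly_mul_comm {m : ℕ} (M N : Matrix (Fin m) (Fin m) ℝ) :
    (M * N).charpoly = (N * M).charpoly := by
  refine Polynomial.eq_of_infinite_eval_eq _ _
    (Set.Infinite.mono ?_ ((Set.finite_singleton (0 : ℝ)).infinite_compl))
  intro t ht
  have ht0 : t ≠ 0 := ht
  simp only [Set.mem_setOf_eq]
  rw [my_eval_charpoly, my_eval_charpoly]
  have key : ∀ P Q : Matrix (Fin m) (Fin m) ℝ,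
      Matrix.scalar (Fin m) t - P * Q = t • (1 - (t⁻¹ • P) * Q) := by
    intro P Q
    rw [Matrix.smul_mul, smul_sub, smul_smul, mul_inv_cancel₀ ht0, one_smul]
    congr 1
    simp [Matrix.scalar_apply, Matrix.smul_eq_diagonal_mul]
  rw [key M N, key N M, Matrix.det_smul, Matrix.det_smul]
  congr 1
  calc (1 - (t⁻¹ • M) * N).det = (1 - N * (t⁻¹ • M)).det :=
        Matrix.det_one_sub_mul_comm _ _
    _ = (1 - (t⁻¹ • N) * M).det := by
        rw [Matrix.mul_smul, Matrix.smul_mul]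

private lemma my_psd_map {m : ℕ} {C : Matrix (Fin m) (Fin m) ℝ} (hC : C.PosSemidef) :
    (C.map (algebraMap ℝ ℂ)).PosSemidef := by
  obtain ⟨D, rfl⟩ := CStarAlgebra.nonneg_iff_eq_star_mul_self.mp hC.nonneg
  have hstar : Function.Semiconj (algebraMap ℝ ℂ) star star := fun r => by
    simp [Complex.conj_ofReal]
  rw [Matrix.star_eq_conjTranspose, Matrix.map_mul, Matrix.conjTranspose_map (algebraMap ℝ ℂ) hstar]
  exact Matrix.posSemidef_conjTranspose_mul_self _

/-- If `A` and `B` are real symmetric positive semidefinite matrices, then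
every complex root of the characteristic polynomial of `A·B` is a nonnegative real number. -/
theorem eigenvalues_product_psd_nonneg {n : ℕ}
    (A B : Matrix (Fin n) (Fin n) ℝ) (hA : A.PosSemidef) (hB : B.PosSemidef)
    (μ : ℂ) (hμ : (((A * B).charpoly).map (algebraMap ℝ ℂ)).IsRoot μ) :
    μ.im = 0 ∧ 0 ≤ μ.re := by
  set S := CFC.sqrt A with hS
  have hSh : Sᴴ = S := (CFC.sqrt_nonneg A).posSemidef.isHermitian
  have hAB : A * B = S * (S * B) := by
    rw [← mul_assoc, CFC.sqrt_mul_sqrt_self A hA.nonneg]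
  have hcp : (A * B).charpoly = (S * B * S).charpoly := by
    rw [hAB, my_charpoly_mul_comm, mul_assoc]
  set C := S * B * S with hCdef
  have hCpsd : C.PosSemidef := by
    have := hB.mul_mul_conjTranspose_same S
    rwa [hSh] at this
  set Cc := C.map (algebraMap ℝ ℂ) with hCc
  have hCcpsd : Cc.PosSemidef := my_psd_map hCpsd
  have hroot : Cc.charpoly.eval μ = 0 := by
    rw [hCc, Matrix.charpoly_map]
    rw [hcp] at hμ
    exact hμ
  rw [my_eval_charpoly] at hroot
  obtain ⟨v, hv0, hv⟩ := (Matrix.exists_mulVec_eq_zero_iff).2 hroot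
  have hvC : Cc *ᵥ v = μ • v := by
    rw [Matrix.sub_mulVec, sub_eq_zero] at hv
    have h2 : Matrix.scalar (Fin n) μ *ᵥ v = μ • v := by
      funext i
      simp [Matrix.scalar_apply, Matrix.mulVec_diagonal]
    rw [← hv, h2]
  have hdot : star v ⬝ᵥ (Cc *ᵥ v) = μ * (star v ⬝ᵥ v) := by
    rw [hvC, dotProduct_smul, smul_eq_mul]
  have hnn : 0 ≤ μ * (star v ⬝ᵥ v) := hdot ▸ hCcpsd.dotProduct_mulVec_nonneg v
  set d : ℂ := star v ⬝ᵥ v with hd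
  have hdnn : 0 ≤ d := dotProduct_star_self_nonneg v
  have hdne : d ≠ 0 := fun h => hv0 (dotProduct_star_self_eq_zero.mp h)
  have hdre : 0 < d.re ∧ d.im = 0 := by
    rcases Complex.nonneg_iff.mp hdnn with ⟨h1, h2⟩
    refine ⟨lt_of_le_of_ne h1 fun h => hdne ?_, h2.symm⟩
    apply Complex.ext <;> simp [← h, ← h2]
  rcases Complex.nonneg_iff.mp hnn with ⟨hre, him⟩
  have him' : μ.im * d.re = 0 := by
    have := him.symm
    simpa [Complex.mul_im, hdre.2] using this
  have hμim : μ.im = 0 := by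
    rcases mul_eq_zero.mp him' with h | h
    · exact h
    · exact absurd h hdre.1.ne'
  refine ⟨hμim, ?_⟩
  have hre' : 0 ≤ μ.re * d.re := by
    simpa [Complex.mul_re, hdre.2, hμim] using hre
  exact nonneg_of_mul_nonneg_right (by linarith [hre']) hdre.1
end
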